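/- Let G = (V,E) be a DAG, i ∈ V, and A ⊆ V \ {i}. Suppose A contains a proper descendant of i. Fix ω ∈ (0,∞)^V. Then there exists Λ ∈ ℝ^E such that the covariance matrix Σ = (I−Λ)^{-T} diag(ω) (I−Λ)^{-1} satisfies ω_i ≠ Σ_{ii} − Σ_{i,A} (Σ_{A,A})^{-1} Σ_{A,i}. -/

import Mathlib

open Matrix

/-- The conditional variance `Σ_{ii} - Σ_{i,A} (Σ_{A,A})⁻¹ Σ_{A,i}` of variable `i`
given the variables in `A`. -/
noncomputable def condVar {V : Type*} [Fintype V] [DecidableEq V]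
    (Cov : Matrix V V ℝ) (i : V) (A : Finset V) : ℝ :=
  Cov i i - ∑ a : A, ∑ b : A,
    Cov i a * (Cov.submatrix (Subtype.val : A → V) Subtype.val)⁻¹ a b * Cov b i

section Aux

variable {V : Type*} [Fintype V] [DecidableEq V] {E : V → V → Prop}

lemma aux_chain (B : Matrix V V ℝ) (hB : ∀ a b, B a b ≠ 0 → E a b) :
    ∀ m a b, (B ^ m) a b ≠ 0 → ∃ l : List V, List.Chain E a l ∧ l.length = m ∧
      (a :: l).getLast (List.cons_ne_nil a l) = b := by
  intro m
  induction m with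
  | zero =>
    intro a b h
    rw [pow_zero] at h
    have hab : a = b := by
      by_contra hne
      exact h (Matrix.one_apply_ne hne)
    exact ⟨[], List.Chain.nil, rfl, by simp [hab]⟩
  | succ m ih =>
    intro a b h
    rw [pow_succ', Matrix.mul_apply] at h
    obtain ⟨c, -, hc⟩ := Finset.exists_ne_zero_of_sum_ne_zero h
    have h1 : B a c ≠ 0 := fun h0 => hc (by rw [h0, zero_mul])
    have h2 : (B ^ m) c b ≠ 0 := fun h0 => hc (by rw [h0, mul_zero])
    obtain ⟨l, hl, hlen, hlast⟩ := ih c b h2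
    refine ⟨c :: l, List.Chain.cons (hB a c h1) hl, by simp [hlen], ?_⟩
    rw [List.getLast_cons (List.cons_ne_nil c l)]
    exact hlast

lemma aux_nilpotent (hacyc : ∀ i, ¬ Relation.TransGen E i i)
    (B : Matrix V V ℝ) (hB : ∀ a b, B a b ≠ 0 → E a b) :
    B ^ (Fintype.card V) = 0 := by
  haveI : IsTrans V (Relation.TransGen E) := ⟨fun _ _ _ => Relation.TransGen.trans⟩
  ext a b
  rw [Matrix.zero_apply]
  by_contra h
  obtain ⟨l, hl, hlen, -⟩ := aux_chain B hB _ a b h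
  have hchain : List.Chain (Relation.TransGen E) a l :=
    List.Chain.imp (fun _ _ h => Relation.TransGen.single h) hl
  have hpw : (a :: l).Pairwise (Relation.TransGen E) := List.isChain_iff_pairwise.mp hchain
  have hnd : (a :: l).Nodup :=
    hpw.imp (fun {x y} (hxy : Relation.TransGen E x y) (he : x = y) => hacyc y (he ▸ hxy))
  have hle := hnd.length_le_card
  simp [hlen] at hle

lemma aux_nonneg (B : Matrix V V ℝ) (hB : ∀ a b, 0 ≤ B a b) (m : ℕ) :
    ∀ a b, 0 ≤ (B ^ m) a b := by
  induction m with
  | zero =>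
    intro a b
    rw [pow_zero]
    rcases eq_or_ne a b with h | h
    · simp [h, Matrix.one_apply]
    · simp [Matrix.one_apply_ne h]
  | succ m ih =>
    intro a b
    rw [pow_succ, Matrix.mul_apply]
    exact Finset.sum_nonneg fun c _ => mul_nonneg (ih a c) (hB c b)

lemma aux_posdef (D : V → ℝ) (hD : ∀ a, 0 < D a) (S : Matrix V V ℝ)
    (hS : ∀ x : V → ℝ, S *ᵥ x = 0 → x = 0) :
    (Sᵀ * Matrix.diagonal D * S).PosDef := by
  have hd : (Matrix.diagonal D).PosDef := Matrix.PosDef.diagonal hD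
  refine Matrix.PosDef.of_dotProduct_mulVec_pos ?_ ?_
  · rw [Matrix.IsHermitian, conjTranspose_eq_transpose_of_trivial]
    rw [Matrix.transpose_mul, Matrix.transpose_mul, Matrix.transpose_transpose,
      Matrix.diagonal_transpose, Matrix.mul_assoc]
  · intro x hx
    have hx' : S *ᵥ x ≠ 0 := fun h0 => hx (hS x h0)
    have := hd.dotProduct_mulVec_pos hx'
    calc  (0:ℝ) < star (S *ᵥ x) ⬝ᵥ (Matrix.diagonal D) *ᵥ (S *ᵥ x) := this
      _ = star x ⬝ᵥ (Sᵀ * Matrix.diagonal D * S) *ᵥ x := by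
          rw [show (Sᵀ : Matrix V V ℝ) = Sᴴ from (conjTranspose_eq_transpose_of_trivial S).symm]
          simp only [star_mulVec, dotProduct_mulVec, vecMul_vecMul]

end Aux

open scoped Classical in
/-- The matrix of edge coefficients along paths from `i` to `k`. -/
noncomputable def pathMatrix {V : Type*} (E : V → V → Prop) (i k : V) : Matrix V V ℝ :=
  fun a b => if E a b ∧ Relation.ReflTransGen E i a ∧ Relation.ReflTransGen E b k then 1 else 0

theorem stmt5 {V : Type*} [Fintype V] [DecidableEq V]
    (E : V → V → Prop) (hacyc : ∀ i, ¬ Relation.TransGen E i i)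
    (i k : V) (A : Finset V) (hiA : i ∉ A)
    (hkA : k ∈ A) (hki : k ≠ i) (hdesc : Relation.ReflTransGen E i k)
    (ω : V → ℝ) (hω : ∀ a, 0 < ω a) :
    ∃ Λ : Matrix V V ℝ, (∀ a b, ¬ E a b → Λ a b = 0) ∧
      ω i ≠ condVar (((1 - Λ)ᵀ)⁻¹ * Matrix.diagonal ω * (1 - Λ)⁻¹) i A := by
  classical
  set Λ : Matrix V V ℝ := pathMatrix E i k with hΛdef
  have hsupp : ∀ a b, ¬ E a b → Λ a b = 0 := by
    intro a b h
    simp only [hΛdef, pathMatrix]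
    rw [if_neg (fun hc => h hc.1)]
  refine ⟨Λ, hsupp, ?_⟩
  have hE : ∀ a b, Λ a b ≠ 0 → E a b := fun a b h => by
    by_contra he; exact h (hsupp a b he)
  have hnonneg : ∀ a b, 0 ≤ Λ a b := by
    intro a b
    simp only [hΛdef, pathMatrix]
    split <;> norm_num
  have hone : ∀ a b, E a b → Relation.ReflTransGen E i a → Relation.ReflTransGen E b k →
      Λ a b = 1 := by
    intro a b h1 h2 h3
    simp only [hΛdef, pathMatrix]
    rw [if_pos ⟨h1, h2, h3⟩]
  set M := Fintype.card V with hM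
  have hnil : Λ ^ M = 0 := aux_nilpotent hacyc Λ hE
  set S : Matrix V V ℝ := ∑ m ∈ Finset.range M, Λ ^ m with hSdef
  have hcomm : Commute Λ S := Commute.sum_right _ _ _ fun m _ => (Commute.refl Λ).pow_right m
  have hSl : S * (1 - Λ) = 1 := by
    have h1 : S * (Λ - 1) = Λ ^ M - 1 := geom_sum_mul Λ M
    rw [hnil, zero_sub] at h1
    calc S * (1 - Λ) = -(S * (Λ - 1)) := by rw [← mul_neg, neg_sub]
      _ = 1 := by rw [h1, neg_neg]
  have hSr : (1 - Λ) * S = 1 := by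
    have hc : Commute S (1 - Λ) := (Commute.one_right S).sub_right hcomm.symm
    rw [← hc.eq]; exact hSl
  have hNinv : (1 - Λ)⁻¹ = S := Matrix.inv_eq_right_inv hSr
  have hTinv : ((1 - Λ)ᵀ)⁻¹ = Sᵀ :=
    Matrix.inv_eq_right_inv (by rw [← Matrix.transpose_mul, hSl, Matrix.transpose_one])
  rw [hNinv, hTinv]
  set Sig : Matrix V V ℝ := Sᵀ * Matrix.diagonal ω * S with hSigdef
  have hentry : ∀ a b, Sig a b = ∑ j, S j a * (ω j * S j b) := by
    intro a b
    rw [hSigdef, Matrix.mul_apply]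
    refine Finset.sum_congr rfl fun c _ => ?_
    rw [Matrix.mul_diagonal, Matrix.transpose_apply, mul_assoc]
  have hcolΛ : ∀ c, Λ c i = 0 := by
    intro c
    by_contra h
    have hP : E c i ∧ Relation.ReflTransGen E i c ∧ Relation.ReflTransGen E i k := by
      by_contra hP
      exact h (by simp only [hΛdef, pathMatrix]; rw [if_neg hP])
    exact hacyc i (Relation.TransGen.tail' hP.2.1 hP.1)
  have hpowcol : ∀ m j, (Λ ^ (m + 1)) j i = 0 := by
    intro m j
    rw [pow_succ, Matrix.mul_apply]
    exact Finset.sum_eq_zero fun c _ => by rw [hcolΛ c, mul_zero]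
  have hMpos : 0 < M := by
    rw [hM]
    exact Fintype.card_pos_iff.mpr ⟨i⟩
  have hScol : ∀ j, S j i = if j = i then 1 else 0 := by
    intro j
    rw [hSdef, Matrix.sum_apply]
    rw [Finset.sum_eq_single 0 (fun m _ hm => by
      obtain ⟨m', rfl⟩ := Nat.exists_eq_succ_of_ne_zero hm
      exact hpowcol m' j)
      (fun h => absurd (Finset.mem_range.mpr hMpos) h)]
    rw [pow_zero]
    exact Matrix.one_apply
  have hpow_nonneg := aux_nonneg Λ hnonneg
  have hSik : 0 < S i k := by
    have key : ∀ a, Relation.ReflTransGen E a k → Relation.ReflTransGen E i a →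
        ∃ m, 0 < (Λ ^ m) a k := by
      intro a h
      induction h using Relation.ReflTransGen.head_induction_on with
      | refl => exact fun _ => ⟨0, by rw [pow_zero]; simp [Matrix.one_apply]⟩
      | @head a' c' hab hbk ih =>
        intro hia
        obtain ⟨m, hm⟩ := ih (hia.tail hab)
        refine ⟨m + 1, ?_⟩
        rw [pow_succ', Matrix.mul_apply]
        refine Finset.sum_pos' (fun d _ => mul_nonneg (hnonneg _ _) (hpow_nonneg m _ _))
          ⟨c', Finset.mem_univ c', ?_⟩
        rw [hone _ _ hab hia hbk, one_mul]
        exact hm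
    obtain ⟨m, hm⟩ := key i hdesc Relation.ReflTransGen.refl
    have hmM : m < M := by
      by_contra hge
      have hz : Λ ^ m = 0 := by
        obtain ⟨d, rfl⟩ := Nat.exists_eq_add_of_le (not_lt.mp hge)
        rw [pow_add, hnil, zero_mul]
      rw [hz] at hm
      simp at hm
    have hSe : S i k = ∑ m' ∈ Finset.range M, (Λ ^ m') i k := by
      rw [hSdef, Matrix.sum_apply]
    rw [hSe]
    exact Finset.sum_pos' (fun m' _ => hpow_nonneg m' i k) ⟨m, Finset.mem_range.mpr hmM, hm⟩
  have hSigii : Sig i i = ω i := by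
    rw [hentry]
    rw [Finset.sum_eq_single i (fun j _ hj => by rw [hScol j, if_neg hj]; ring) (by simp)]
    rw [hScol i, if_pos rfl]
    ring
  have hSigi : ∀ a, Sig i a = ω i * S i a := by
    intro a
    rw [hentry]
    rw [Finset.sum_eq_single i (fun j _ hj => by rw [hScol j, if_neg hj]; ring) (by simp)]
    rw [hScol i, if_pos rfl]
    ring
  have hSigb : ∀ a, Sig a i = ω i * S i a := by
    intro a
    rw [hentry]
    rw [Finset.sum_eq_single i (fun j _ hj => by rw [hScol j, if_neg hj]; ring) (by simp)]
    rw [hScol i, if_pos rfl]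
    ring
  have hmulinj : ∀ x : V → ℝ, S *ᵥ x = 0 → x = 0 := by
    intro x hx
    have h1 : (1 - Λ) *ᵥ (S *ᵥ x) = x := by
      rw [Matrix.mulVec_mulVec, hSr, Matrix.one_mulVec]
    rw [hx, Matrix.mulVec_zero] at h1
    exact h1.symm
  have hPD : Sig.PosDef := aux_posdef ω hω S hmulinj
  have hsym : ∀ u v, Sig u v = Sig v u := by
    intro u v
    conv_lhs => rw [← hPD.1]
    rfl
  have hrestrict : ∀ g : V → ℝ, (∀ v, v ∉ A → g v = 0) → ∑ v, g v = ∑ a : A, g ↑a := by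
    intro g hg
    rw [Finset.sum_coe_sort A g]
    exact (Finset.sum_subset A.subset_univ fun v _ hv => hg v hv).symm
  set T : Matrix A A ℝ := Sig.submatrix (Subtype.val : A → V) Subtype.val with hTdef
  have hPDT : T.PosDef := by
    refine Matrix.PosDef.of_dotProduct_mulVec_pos ?_ ?_
    · rw [Matrix.IsHermitian, conjTranspose_eq_transpose_of_trivial]
      ext a b
      simp only [Matrix.transpose_apply, hTdef, Matrix.submatrix_apply]
      exact hsym _ _
    · intro x hx
      set y : V → ℝ := fun v => if h : v ∈ A then x ⟨v, h⟩ else 0 with hy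
      have hyA : ∀ a : A, y ↑a = x a := by
        intro a
        simp only [hy, a.2, dif_pos, Subtype.coe_eta]
      have hy0 : ∀ v, v ∉ A → y v = 0 := fun v hv => by simp only [hy, dif_neg hv]
      have hyne : y ≠ 0 := by
        intro h0
        apply hx
        funext a
        have := congrFun h0 ↑a
        rw [hyA a] at this
        exact this
      have hq := hPD.dotProduct_mulVec_pos hyne
      have hEq : star x ⬝ᵥ T *ᵥ x = star y ⬝ᵥ Sig *ᵥ y := by
        simp only [dotProduct, Matrix.mulVec, star_trivial, Pi.star_apply]
        rw [hrestrict (fun v => y v * ∑ w, Sig v w * y w) (fun v hv => by simp only [hy0 v hv, zero_mul])]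
        refine Finset.sum_congr rfl fun a _ => ?_
        rw [hyA a]
        congr 1
        rw [hrestrict (fun w => Sig ↑a w * y w) (fun w hw => by simp only [hy0 w hw, mul_zero])]
        refine Finset.sum_congr rfl fun b _ => ?_
        rw [hyA b, hTdef, Matrix.submatrix_apply]
      rw [hEq]
      exact hq
  have hPDinv : (T⁻¹).PosDef := hPDT.inv
  set v : A → ℝ := fun a => ω i * S i ↑a with hv
  have hvne : v ≠ 0 := by
    intro h0
    have hk0 := congrFun h0 ⟨k, hkA⟩
    simp only [hv, Pi.zero_apply] at hk0
    rcases mul_eq_zero.mp hk0 with h | h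
    · exact (hω i).ne' h
    · exact hSik.ne' h
  have hqpos := hPDinv.dotProduct_mulVec_pos hvne
  have hsum : ∑ a : A, ∑ b : A, Sig i ↑a * T⁻¹ a b * Sig ↑b i = star v ⬝ᵥ T⁻¹ *ᵥ v := by
    simp only [dotProduct, Matrix.mulVec, star_trivial, Pi.star_apply, Finset.mul_sum]
    refine Finset.sum_congr rfl fun a _ => Finset.sum_congr rfl fun b _ => ?_
    rw [hSigi, hSigb, hv]
    ring
  rw [condVar, hSigii]
  have hq2 : 0 < ∑ a : A, ∑ b : A, Sig i ↑a * T⁻¹ a b * Sig ↑b i := by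
    rw [hsum]; exact hqpos
  intro h
  rw [← hTdef] at h
  linarith
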